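/- Let P ⊆ ℝ² and let ∅ ≠ S ⊆ P be a finite set of witnesses, with associated partition P = J0 ⊔ J1 ⊔ J2. Then for every finite set C ⊆ P of guards covering S (i.e., S ⊆ V(C)), one has 2·|C ∩ J2| + |C ∩ J1| ≥ 2. Equivalently, covering S requires at least one guard in J2 or at least two guards in J1, so the inequality α_S is valid for every binary feasible solution of AGP(G', P) for any finite guard set G' ⊆ P. -/
import Mathlib


/-- Points of the Euclidean plane. -/
abbrev Pt := EuclideanSpace ℝ (Fin 2)

/-- Visibility region of `p` in `P`. -/
def Vis (P : Set Pt) (p : Pt) : Set Pt := {q ∈ P | segment ℝ p q ⊆ P}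

/-- `J2`: points of `P` that see all of `S`. -/
def J2 (P S : Set Pt) : Set Pt := {p ∈ P | S ⊆ Vis P p}

/-- `J0`: points of `P` that see nothing of `S`. -/
def J0 (P S : Set Pt) : Set Pt := {p ∈ P | Vis P p ∩ S = ∅}

/-- `J1`: the remaining points of `P`. -/
def J1 (P S : Set Pt) : Set Pt := P \ (J0 P S ∪ J2 P S)

/-- For every nonempty finite set `S ⊆ P` of witnesses and every finite
set `C ⊆ P` of guards covering `S` (i.e. `S ⊆ V(C) = ⋃_{c ∈ C} V(c)`), one has
`2·|C ∩ J2| + |C ∩ J1| ≥ 2`; i.e. the inequality `α_S` is valid for every binary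
feasible guard cover. -/
theorem alphaS_valid (P : Set Pt) (S : Finset Pt) (hSne : S.Nonempty) (hSP : ↑S ⊆ P)
    (C : Finset Pt) (hCP : ↑C ⊆ P)
    (hcover : (↑S : Set Pt) ⊆ ⋃ c ∈ C, Vis P c) :
    2 ≤ 2 * ((↑C : Set Pt) ∩ J2 P ↑S).ncard + ((↑C : Set Pt) ∩ J1 P ↑S).ncard := by
  have hfin2 : ((↑C : Set Pt) ∩ J2 P ↑S).Finite := C.finite_toSet.inter_of_left _
  have hfin1 : ((↑C : Set Pt) ∩ J1 P ↑S).Finite := C.finite_toSet.inter_of_left _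
  by_cases h2 : ∃ c ∈ C, c ∈ J2 P ↑S
  · obtain ⟨c, hcC, hc2⟩ := h2
    have h1 : 1 ≤ ((↑C : Set Pt) ∩ J2 P ↑S).ncard := by
      exact (Set.ncard_pos hfin2).mpr ⟨c, hcC, hc2⟩
    omega
  · push_neg at h2
    -- every guard that sees a witness lies in J1
    have hJ1 : ∀ c ∈ C, ∀ s ∈ S, s ∈ Vis P c → c ∈ J1 P ↑S := by
      intro c hcC s hsS hsee
      refine ⟨hCP hcC, ?_⟩
      rintro (h0 | hJ2)
      · exact absurd (Set.eq_empty_iff_forall_notMem.mp h0.2 s ⟨hsee, hsS⟩) (not_false)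
      · exact h2 c hcC hJ2
    obtain ⟨s0, hs0⟩ := hSne
    obtain ⟨c1, hc1C, hc1see⟩ := by
      have := hcover (Finset.mem_coe.mpr hs0)
      simpa using this
    -- c1 is not in J2, so there is a witness s1 it doesn't see
    have hc1notJ2 : ¬ (↑S : Set Pt) ⊆ Vis P c1 := by
      intro hsub
      exact h2 c1 hc1C ⟨hCP hc1C, hsub⟩
    obtain ⟨s1, hs1S, hs1nsee⟩ := Set.not_subset.mp hc1notJ2
    obtain ⟨c2, hc2C, hc2see⟩ := by
      have := hcover hs1S
      simpa using this
    have hne : c1 ≠ c2 := by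
      rintro rfl; exact hs1nsee hc2see
    have hs1S' : s1 ∈ S := hs1S
    have hmem1 : c1 ∈ (↑C : Set Pt) ∩ J1 P ↑S :=
      ⟨hc1C, hJ1 c1 hc1C s0 hs0 hc1see⟩
    have hmem2 : c2 ∈ (↑C : Set Pt) ∩ J1 P ↑S :=
      ⟨hc2C, hJ1 c2 hc2C s1 hs1S' hc2see⟩
    have h1 : 1 < ((↑C : Set Pt) ∩ J1 P ↑S).ncard := by
      exact (Set.one_lt_ncard_iff hfin1).mpr ⟨c1, c2, hmem1, hmem2, hne⟩
    omega
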